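/- Let ρ > 0 and let u : ℝⁿ → ℝ be a C² function. Suppose p is a point with |p| < ρ and u(p) > 0, and suppose p is a local maximum of the function F(x) = (ρ² − |x|²)²·u(x) on the open ball of radius ρ. Then Δu(p) ≤ u(p)·( 24|p|²/(ρ² − |p|²)² + 4n/(ρ² − |p|²) ), where Δ is the Euclidean Laplacian and |·| the Euclidean norm. -/

import Mathlib

open Topology


lemma second_deriv_nonpos_of_isLocalMax (g : ℝ → ℝ) (hg : ContDiff ℝ 2 g)
    (hm : IsLocalMax g 0) : deriv (deriv g) 0 ≤ 0 := by
  by_contra hc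
  push_neg at hc
  have hg1 : ContDiff ℝ 1 (deriv g) := by
    have h2 : ContDiff ℝ (1 + 1 : ℕ) g := by norm_num; exact hg
    exact ((contDiff_succ_iff_deriv (n := 1)).mp (by exact_mod_cast h2)).2.2
  have hcont : Continuous (deriv (deriv g)) := hg1.continuous_deriv le_rfl
  have hd0 : deriv g 0 = 0 := hm.deriv_eq_zero
  have h1 : ∀ᶠ t in 𝓝 (0 : ℝ), 0 < deriv (deriv g) t :=
    hcont.continuousAt (isOpen_Ioi.mem_nhds hc)
  obtain ⟨δ, hδ0, hδ⟩ := Metric.eventually_nhds_iff.mp h1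
  obtain ⟨ε, hε0, hε⟩ := Metric.eventually_nhds_iff.mp hm
  set r : ℝ := min δ ε / 2 with hrdef
  have hr0 : 0 < r := by positivity
  have hrδ : r < δ := by
    have := min_le_left δ ε; simp only [hrdef]; linarith
  have hrε : r < ε := by
    have := min_le_right δ ε; simp only [hrdef]; linarith
  have hmono2 : StrictMonoOn (deriv g) (Set.Icc 0 r) := by
    apply strictMonoOn_of_deriv_pos (convex_Icc 0 r) (hg1.continuous.continuousOn)
    intro x hx
    rw [interior_Icc] at hx
    exact hδ (by rw [Real.dist_eq, sub_zero, abs_of_pos hx.1]; linarith [hx.2])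
  have hpos : ∀ x ∈ Set.Ioo (0 : ℝ) r, 0 < deriv g x := by
    intro x hx
    have := hmono2 ⟨le_refl 0, hr0.le⟩ ⟨hx.1.le, hx.2.le⟩ hx.1
    rwa [hd0] at this
  have hmono : StrictMonoOn g (Set.Icc 0 r) := by
    apply strictMonoOn_of_deriv_pos (convex_Icc 0 r) (hg.continuous.continuousOn)
    intro x hx
    rw [interior_Icc] at hx
    exact hpos x hx
  have h2 : g 0 < g r := hmono ⟨le_refl 0, hr0.le⟩ ⟨hr0.le, le_refl r⟩ hr0
  have h3 : g r ≤ g 0 := hε (by rw [Real.dist_eq, sub_zero, abs_of_pos hr0]; exact hrε)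
  linarith



/-- The Euclidean Laplacian of `u : ℝⁿ → ℝ`, i.e. the trace of the Hessian. -/
noncomputable def laplacian {n : ℕ} (u : EuclideanSpace ℝ (Fin n) → ℝ)
    (x : EuclideanSpace ℝ (Fin n)) : ℝ :=
  ∑ i : Fin n,
    fderiv ℝ (fun y => fderiv ℝ u y (EuclideanSpace.single i 1)) x
      (EuclideanSpace.single i 1)

/-- Let `ρ > 0` and `u : ℝⁿ → ℝ` be C². If `p` with `|p| < ρ`, `u(p) > 0` is a
local maximum of `F(x) = (ρ² − |x|²)²·u(x)` on the open ball of radius `ρ`,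
then `Δu(p) ≤ u(p)·(24|p|²/(ρ² − |p|²)² + 4n/(ρ² − |p|²))`. -/
theorem laplacian_estimate_at_max_point
    {n : ℕ} (ρ : ℝ) (hρ : 0 < ρ) (u : EuclideanSpace ℝ (Fin n) → ℝ)
    (hu : ContDiff ℝ 2 u)
    (p : EuclideanSpace ℝ (Fin n)) (hp : ‖p‖ < ρ) (hup : 0 < u p)
    (hmax : IsLocalMaxOn (fun x => (ρ ^ 2 - ‖x‖ ^ 2) ^ 2 * u x)
      (Metric.ball 0 ρ) p) :
    laplacian u p ≤ u p * (24 * ‖p‖ ^ 2 / (ρ ^ 2 - ‖p‖ ^ 2) ^ 2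
      + 4 * (n : ℝ) / (ρ ^ 2 - ‖p‖ ^ 2)) := by
  set a : ℝ := ρ ^ 2 - ‖p‖ ^ 2 with ha_def
  have ha : 0 < a := by
    have h0 : (0:ℝ) ≤ ‖p‖ := norm_nonneg p
    rw [ha_def]; nlinarith
  have hmem : Metric.ball (0 : EuclideanSpace ℝ (Fin n)) ρ ∈ 𝓝 p :=
    Metric.isOpen_ball.mem_nhds (by simpa [Metric.mem_ball, dist_zero_right] using hp)
  have hFmax : IsLocalMax (fun x => (ρ ^ 2 - ‖x‖ ^ 2) ^ 2 * u x) p := hmax.isLocalMax hmem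
  have hdiffu : Differentiable ℝ u := hu.differentiable (by norm_num)
  have hfd : ContDiff ℝ 1 (fderiv ℝ u) := hu.fderiv_right (by norm_num)
  have key : ∀ i : Fin n,
      fderiv ℝ (fun y => fderiv ℝ u y (EuclideanSpace.single i 1)) p
        (EuclideanSpace.single i 1) ≤ u p * (24 * (p i) ^ 2 / a ^ 2 + 4 / a) := by
    intro i
    set v : EuclideanSpace ℝ (Fin n) := EuclideanSpace.single i 1 with hv
    set b : ℝ := p i with hb
    set L : ℝ := fderiv ℝ (fun y => fderiv ℝ u y v) p v with hL_def
    -- the line t ↦ p + t • v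
    have hline : ∀ t : ℝ, HasDerivAt (fun t : ℝ => p + t • v) v t := by
      intro t
      simpa using ((hasDerivAt_id t).smul_const v).const_add p
    have hlinecd : ContDiff ℝ 2 (fun t : ℝ => p + t • v) :=
      contDiff_const.add (contDiff_id.smul contDiff_const)
    -- norm identity
    have hnrm : ∀ t : ℝ, ‖p + t • v‖ ^ 2 = ‖p‖ ^ 2 + 2 * b * t + t ^ 2 := by
      intro t
      rw [norm_add_sq_real, real_inner_smul_right]
      have h1 : (inner ℝ p v : ℝ) = b := by
        simp [hv, hb, EuclideanSpace.inner_single_right]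
      have h2 : ‖t • v‖ = |t| := by
        rw [norm_smul, hv, EuclideanSpace.norm_single]
        simp [Real.norm_eq_abs]
      rw [h1, h2, sq_abs]
      ring
    set h : ℝ → ℝ := fun t => u (p + t • v) with hh_def
    set H : ℝ → ℝ := fun t => fderiv ℝ u (p + t • v) v with hH_def
    have hH : ∀ t : ℝ, HasDerivAt h (H t) t := fun t =>
      (hdiffu (p + t • v)).hasFDerivAt.comp_hasDerivAt t (hline t)
    have hh0 : h 0 = u p := by simp [hh_def]
    -- second derivative of h at 0 is L
    have hφdiff : DifferentiableAt ℝ (fun y => fderiv ℝ u y v) p :=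
      ((hfd.differentiable one_ne_zero) p).clm_apply (differentiableAt_const v)
    have hL : HasDerivAt H L 0 := by
      have e : p = p + (0 : ℝ) • v := by simp
      have h1 : HasFDerivAt (fun y => fderiv ℝ u y v)
          (fderiv ℝ (fun y => fderiv ℝ u y v) p) (p + (0 : ℝ) • v) := by
        rw [← e]; exact hφdiff.hasFDerivAt
      exact h1.comp_hasDerivAt 0 (hline 0)
    -- the function g and its derivatives
    set g : ℝ → ℝ := fun t => (ρ ^ 2 - ‖p + t • v‖ ^ 2) ^ 2 * u (p + t • v) with hg_def
    have hgeq : g = fun t => (a - 2 * b * t - t ^ 2) ^ 2 * h t := by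
      funext t
      simp only [hg_def, hh_def]
      rw [hnrm t, ha_def]
      ring
    have hP : ∀ t : ℝ, HasDerivAt (fun s : ℝ => a - 2 * b * s - s ^ 2)
        (-(2 * b) - 2 * t) t := by
      intro t
      have h1 : HasDerivAt (fun s : ℝ => 2 * b * s) (2 * b) t := by
        simpa using (hasDerivAt_id t).const_mul (2 * b)
      have h2 : HasDerivAt (fun s : ℝ => s ^ 2) (2 * t) t := by
        simpa using hasDerivAt_pow 2 t
      have := ((hasDerivAt_const t a).sub h1).sub h2
      exact this.congr_deriv (by ring)
    have hP2 : ∀ t : ℝ, HasDerivAt (fun s : ℝ => (a - 2 * b * s - s ^ 2) ^ 2)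
        (2 * (a - 2 * b * t - t ^ 2) * (-(2 * b) - 2 * t)) t := by
      intro t
      have := (hP t).pow 2
      exact this.congr_deriv (by ring)
    set G : ℝ → ℝ := fun t =>
      2 * (a - 2 * b * t - t ^ 2) * (-(2 * b) - 2 * t) * h t
        + (a - 2 * b * t - t ^ 2) ^ 2 * H t with hG_def
    have hg' : ∀ t : ℝ, HasDerivAt g (G t) t := by
      intro t
      rw [hgeq]
      exact (hP2 t).mul (hH t)
    -- derivative of G at 0
    set c : ℝ := (8 * b ^ 2 - 4 * a) * h 0 + (-(4 * a * b)) * H 0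
        + (-(4 * a * b)) * H 0 + a ^ 2 * L with hc_def
    have hGc : HasDerivAt G c 0 := by
      have hA : HasDerivAt (fun t : ℝ => 2 * (a - 2 * b * t - t ^ 2) * (-(2 * b) - 2 * t))
          (8 * b ^ 2 - 4 * a) 0 := by
        have hQ : HasDerivAt (fun t : ℝ => -(2 * b) - 2 * t) (-2) 0 := by
          exact ((hasDerivAt_const (0:ℝ) (-(2*b))).sub ((hasDerivAt_id (0:ℝ)).const_mul 2)).congr_deriv (by ring)
        have h3 : HasDerivAt (fun t : ℝ => 2 * (a - 2 * b * t - t ^ 2)) (2 * (-(2 * b) - 2 * 0)) 0 :=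
          (hP 0).const_mul 2
        have := h3.mul hQ
        exact this.congr_deriv (by ring)
      have h1 := hA.mul (hH 0)
      have h2 := (hP2 0).mul hL
      have h4 := h1.add h2
      exact h4.congr_deriv (by rw [hc_def]; ring)
    -- local max of g at 0
    have hgmax : IsLocalMax g 0 := by
      have hcont : Continuous (fun t : ℝ => p + t • v) := hlinecd.continuous
      have htend : Filter.Tendsto (fun t : ℝ => p + t • v) (𝓝 0) (𝓝 p) := by
        have := hcont.tendsto 0
        simpa using this
      have hev := htend.eventually hFmax
      filter_upwards [hev] with t ht
      have hg0 : g 0 = (ρ ^ 2 - ‖p‖ ^ 2) ^ 2 * u p := by simp [hg_def]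
      calc g t ≤ (ρ ^ 2 - ‖p‖ ^ 2) ^ 2 * u p := ht
        _ = g 0 := hg0.symm
    -- C² of g
    have hgcd : ContDiff ℝ 2 g := by
      have hF : ContDiff ℝ 2 (fun x : EuclideanSpace ℝ (Fin n) => (ρ ^ 2 - ‖x‖ ^ 2) ^ 2 * u x) :=
        ((contDiff_const.sub (contDiff_norm_sq ℝ)).pow 2).mul hu
      exact hF.comp hlinecd
    -- conclusions from the local max
    have hd1 : deriv g 0 = 0 := hgmax.deriv_eq_zero
    have hG0eq : G 0 = 0 := by rw [← (hg' 0).deriv]; exact hd1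
    have hderiv_g : deriv g = G := funext fun t => (hg' t).deriv
    have hsec : deriv (deriv g) 0 ≤ 0 := second_deriv_nonpos_of_isLocalMax g hgcd hgmax
    rw [hderiv_g, hGc.deriv] at hsec
    -- algebra
    have e1 : a ^ 2 * H 0 = 4 * a * b * u p := by
      simp only [hG_def] at hG0eq
      rw [hh0] at hG0eq
      linear_combination hG0eq
    have e2 : H 0 * a = 4 * b * u p :=
      mul_left_cancel₀ ha.ne' (by linear_combination e1)
    have e3 : 8 * a * b * H 0 = 32 * b ^ 2 * u p := by linear_combination 8 * b * e2
    rw [hc_def, hh0] at hsec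
    have final : a ^ 2 * L ≤ (4 * a + 24 * b ^ 2) * u p := by linarith
    have hrhs : u p * (24 * b ^ 2 / a ^ 2 + 4 / a) = ((4 * a + 24 * b ^ 2) * u p) / a ^ 2 := by
      field_simp
      ring
    rw [hrhs, le_div_iff₀ (by positivity)]
    linarith
  -- sum over coordinates
  have hsum : ∑ i : Fin n, (p i) ^ 2 = ‖p‖ ^ 2 := by
    rw [EuclideanSpace.norm_eq, Real.sq_sqrt (by positivity)]
    simp [sq_abs]
  calc laplacian u p
      ≤ ∑ i : Fin n, u p * (24 * (p i) ^ 2 / a ^ 2 + 4 / a) :=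
        Finset.sum_le_sum fun i _ => key i
    _ = u p * (24 * ‖p‖ ^ 2 / a ^ 2 + 4 * (n : ℝ) / a) := by
        rw [← Finset.mul_sum]
        congr 1
        rw [Finset.sum_add_distrib, Finset.sum_const, Finset.card_univ, Fintype.card_fin]
        have : ∑ i : Fin n, 24 * (p i) ^ 2 / a ^ 2 = 24 * ‖p‖ ^ 2 / a ^ 2 := by
          rw [← Finset.sum_div, ← Finset.mul_sum, hsum]
        rw [this]
        push_cast
        ring
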